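/- Let a ∈ k be nonzero, let n ≥ 2 be an integer, and let δ be the k-derivation (x² + a·n·x·y^{n−1})·∂/∂x + a·y^n·∂/∂y of k[x,y], where n denotes the image of the integer n in k. Then the kernel of δ equals the k-subalgebra of k[x,y] generated by x², y² and x²y + axy^n. -/

import Mathlib

set_option linter.unusedSectionVars false
set_option maxHeartbeats 1000000

open MvPolynomial

section Aux

variable {k : Type*} [Field k] [CharP k 2]

private lemma mono_eq (d : Fin 2 →₀ ℕ) (c : k) :
    (monomial d c : MvPolynomial (Fin 2) k) = C c * X 0 ^ (d 0) * X 1 ^ (d 1) := by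
  rw [monomial_eq, Finsupp.prod_fintype _ _ (fun i => pow_zero _), Fin.prod_univ_two, mul_assoc]

private lemma expand_two_monomial (d : Fin 2 →₀ ℕ) (c : k) :
    expand 2 (monomial d c : MvPolynomial (Fin 2) k) = monomial (2 • d) c := by
  rw [mono_eq, mono_eq, map_mul, map_mul, expand_C, map_pow, map_pow, expand_X, expand_X]
  simp only [Finsupp.smul_apply, smul_eq_mul, ← pow_mul]

private lemma coeff_expand_two (g : MvPolynomial (Fin 2) k) (d : Fin 2 →₀ ℕ) :
    coeff (2 • d) (expand 2 g) = coeff d g := by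
  induction g using MvPolynomial.induction_on' with
  | monomial d' c =>
    rw [expand_two_monomial, coeff_monomial, coeff_monomial]
    congr 1
    simp only [eq_iff_iff]
    constructor
    · intro h
      ext i
      have := congrArg (fun z : Fin 2 →₀ ℕ => z i) h
      simp only [Finsupp.smul_apply, smul_eq_mul] at this
      omega
    · rintro rfl; rfl
  | add p q hp hq => rw [map_add, coeff_add, coeff_add, hp, hq]

private lemma expand_two_eq_zero {g : MvPolynomial (Fin 2) k} (h : expand 2 g = 0) : g = 0 := by
  ext d
  rw [← coeff_expand_two g d, h, coeff_zero, coeff_zero]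

private lemma expand_mem_adjoin (g : MvPolynomial (Fin 2) k) :
    expand 2 g ∈ Algebra.adjoin k ({X 0 ^ 2, X 1 ^ 2} : Set (MvPolynomial (Fin 2) k)) := by
  induction g using MvPolynomial.induction_on with
  | C c => rw [expand_C, ← algebraMap_eq]; exact Subalgebra.algebraMap_mem _ c
  | add p q hp hq => rw [map_add]; exact add_mem hp hq
  | mul_X p i hp =>
    rw [map_mul, expand_X]
    refine mul_mem hp (Algebra.subset_adjoin ?_)
    fin_cases i
    · exact Set.mem_insert _ _
    · exact Set.mem_insert_of_mem _ rfl

private lemma deriv_sq_zero (D : Derivation k (MvPolynomial (Fin 2) k) (MvPolynomial (Fin 2) k))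
    (z : MvPolynomial (Fin 2) k) : D (z ^ 2) = 0 := by
  rw [Derivation.leibniz_pow, CharTwo.two_nsmul]

private lemma deriv_expand (D : Derivation k (MvPolynomial (Fin 2) k) (MvPolynomial (Fin 2) k))
    (g : MvPolynomial (Fin 2) k) : D (expand 2 g) = 0 := by
  have h : Set.EqOn D (0 : Derivation k (MvPolynomial (Fin 2) k) (MvPolynomial (Fin 2) k))
      ({X 0 ^ 2, X 1 ^ 2} : Set (MvPolynomial (Fin 2) k)) := by
    rintro z (rfl | rfl)
    · rw [deriv_sq_zero]; rfl
    · rw [deriv_sq_zero]; rfl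
  have := Derivation.eqOn_adjoin h (expand_mem_adjoin g)
  simpa using this

private lemma decomp (f : MvPolynomial (Fin 2) k) :
    ∃ f0 f1 f2 f3 : MvPolynomial (Fin 2) k,
      f = expand 2 f0 + expand 2 f1 * X 0 + expand 2 f2 * X 1 + expand 2 f3 * (X 0 * X 1) := by
  induction f using MvPolynomial.induction_on' with
  | add p q hp hq =>
    obtain ⟨p0, p1, p2, p3, rfl⟩ := hp
    obtain ⟨q0, q1, q2, q3, rfl⟩ := hq
    exact ⟨p0 + q0, p1 + q1, p2 + q2, p3 + q3, by simp only [map_add]; ring⟩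
  | monomial d c =>
    rw [mono_eq]
    obtain ⟨p, hi | hi⟩ := Nat.even_or_odd' (d 0) <;>
      obtain ⟨q, hj | hj⟩ := Nat.even_or_odd' (d 1) <;> rw [hi, hj]
    · exact ⟨C c * X 0 ^ p * X 1 ^ q, 0, 0, 0, by
        simp only [map_mul, map_pow, map_zero, expand_C, expand_X]; ring⟩
    · exact ⟨0, 0, C c * X 0 ^ p * X 1 ^ q, 0, by
        simp only [map_mul, map_pow, map_zero, expand_C, expand_X]; ring⟩
    · exact ⟨0, C c * X 0 ^ p * X 1 ^ q, 0, 0, by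
        simp only [map_mul, map_pow, map_zero, expand_C, expand_X]; ring⟩
    · exact ⟨0, 0, 0, C c * X 0 ^ p * X 1 ^ q, by
        simp only [map_mul, map_pow, map_zero, expand_C, expand_X]; ring⟩

private lemma uniq {f0 f1 f2 f3 : MvPolynomial (Fin 2) k}
    (h : expand 2 f0 + expand 2 f1 * X 0 + expand 2 f2 * X 1 + expand 2 f3 * (X 0 * X 1) = 0) :
    f0 = 0 ∧ f1 = 0 ∧ f2 = 0 ∧ f3 = 0 := by
  have e10 : (pderiv (R := k) 1) (X (0 : Fin 2)) = 0 := pderiv_X_of_ne (by decide)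
  have e01 : (pderiv (R := k) 0) (X (1 : Fin 2)) = 0 := pderiv_X_of_ne (by decide)
  have h1 := congrArg (pderiv (R := k) 1) h
  simp only [map_add, Derivation.leibniz, deriv_expand, pderiv_X_self, e10, e01,
    smul_eq_mul, mul_zero, zero_mul, mul_one, add_zero, zero_add, map_zero,
    smul_zero, zero_smul] at h1
  have h2 := congrArg (pderiv (R := k) 0) h1
  simp only [map_add, Derivation.leibniz, deriv_expand, pderiv_X_self, e10, e01,
    smul_eq_mul, mul_zero, zero_mul, mul_one, add_zero, zero_add, map_zero,
    smul_zero, zero_smul] at h2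
  have hf3 : f3 = 0 := expand_two_eq_zero h2
  subst hf3
  simp only [map_zero, zero_mul, add_zero] at h1 h
  have hf2 : f2 = 0 := expand_two_eq_zero h1
  subst hf2
  simp only [map_zero, zero_mul, add_zero] at h
  have h3 := congrArg (pderiv (R := k) 0) h
  simp only [map_add, Derivation.leibniz, deriv_expand, pderiv_X_self, e10, e01,
    smul_eq_mul, mul_zero, zero_mul, mul_one, add_zero, zero_add, map_zero,
    smul_zero, zero_smul] at h3
  have hf1 : f1 = 0 := expand_two_eq_zero h3
  subst hf1
  simp only [map_zero, zero_mul, add_zero, zero_add] at h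
  exact ⟨expand_two_eq_zero h, rfl, rfl, rfl⟩

private lemma X0_dvd_sub_psi (h : MvPolynomial (Fin 2) k) :
    X 0 ∣ h - aeval ![0, (X 1 : MvPolynomial (Fin 2) k)] h := by
  induction h using MvPolynomial.induction_on' with
  | monomial d c =>
    rw [mono_eq]
    rcases Nat.eq_zero_or_pos (d 0) with h0 | h0
    · rw [h0]
      simp only [pow_zero, mul_one, map_mul, map_pow, aeval_C, aeval_X,
        Matrix.cons_val_zero, Matrix.cons_val_one, Matrix.head_cons]
      rw [← algebraMap_eq, sub_self]
      exact dvd_zero _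
    · obtain ⟨e, he⟩ : ∃ e, d 0 = e + 1 := ⟨d 0 - 1, by omega⟩
      rw [he]
      simp only [map_mul, map_pow, aeval_C, aeval_X,
        Matrix.cons_val_zero, Matrix.cons_val_one, Matrix.head_cons]
      rw [zero_pow (by omega), mul_zero, zero_mul, sub_zero]
      exact ⟨C c * X 0 ^ e * X 1 ^ (d 1), by ring⟩
  | add p q hp hq =>
    have : p + q - aeval ![0, (X 1 : MvPolynomial (Fin 2) k)] (p + q) =
        (p - aeval ![0, (X 1 : MvPolynomial (Fin 2) k)] p) +
          (q - aeval ![0, (X 1 : MvPolynomial (Fin 2) k)] q) := by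
      rw [map_add]; ring
    rw [this]
    exact dvd_add hp hq

private lemma X0_dvd_of_psi_eq_zero {h : MvPolynomial (Fin 2) k}
    (hh : aeval ![0, (X 1 : MvPolynomial (Fin 2) k)] h = 0) : X 0 ∣ h := by
  have := X0_dvd_sub_psi h
  rwa [hh, sub_zero] at this

end Aux

/-- For a ≠ 0, n ≥ 2 and δ = (x² + a·n·x·y^{n-1})·∂/∂x + a·yⁿ·∂/∂y,
the kernel of δ equals the k-subalgebra generated by x², y², x²y + axyⁿ. -/
theorem stmt_5 (k : Type*) [Field k] [IsAlgClosed k] [CharP k 2] (a : k) (ha : a ≠ 0)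
    (n : ℕ) (hn : 2 ≤ n)
    (δ : Derivation k (MvPolynomial (Fin 2) k) (MvPolynomial (Fin 2) k))
    (hδ : δ = mkDerivation k
      ![(X 0 : MvPolynomial (Fin 2) k) ^ 2 + C (a * (n : k)) * (X 0 * X 1 ^ (n - 1)),
        C a * X 1 ^ n]) :
    {f : MvPolynomial (Fin 2) k | δ f = 0} =
      ↑(Algebra.adjoin k ({X 0 ^ 2, X 1 ^ 2, X 0 ^ 2 * X 1 + C a * (X 0 * X 1 ^ n)} :
          Set (MvPolynomial (Fin 2) k))) := by
  have h2R : (2 : MvPolynomial (Fin 2) k) = 0 := CharTwo.two_eq_zero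
  have hx : δ (X 0) = X 0 ^ 2 + C (a * (n : k)) * (X 0 * X 1 ^ (n - 1)) := by
    subst hδ
    rw [mkDerivation_X]
    rfl
  have hy : δ (X 1) = C a * X 1 ^ n := by
    subst hδ
    rw [mkDerivation_X]
    rfl
  have hC : ∀ c : k, δ (C c) = 0 := fun c => by
    rw [← algebraMap_eq]; exact Derivation.map_algebraMap δ c
  have hcast : C (a * (n : k)) = C a * (n : MvPolynomial (Fin 2) k) := by
    rw [map_mul, map_natCast]
  ext f
  simp only [Set.mem_setOf_eq, SetLike.mem_coe]
  constructor
  · -- hard direction: kernel ⊆ adjoin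
    intro hf
    obtain ⟨f0, f1, f2, f3, hf_eq⟩ := decomp f
    have hsub : Algebra.adjoin k ({X 0 ^ 2, X 1 ^ 2} : Set (MvPolynomial (Fin 2) k)) ≤
        Algebra.adjoin k ({X 0 ^ 2, X 1 ^ 2, X 0 ^ 2 * X 1 + C a * (X 0 * X 1 ^ n)} :
          Set (MvPolynomial (Fin 2) k)) := by
      apply Algebra.adjoin_mono
      intro z hz
      rcases hz with rfl | rfl
      · exact Set.mem_insert _ _
      · exact Set.mem_insert_of_mem _ (Set.mem_insert _ _)
    have hmemE : ∀ g : MvPolynomial (Fin 2) k, expand 2 g ∈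
        Algebra.adjoin k ({X 0 ^ 2, X 1 ^ 2, X 0 ^ 2 * X 1 + C a * (X 0 * X 1 ^ n)} :
          Set (MvPolynomial (Fin 2) k)) := fun g => hsub (expand_mem_adjoin g)
    have hwmem : (X 0 ^ 2 * X 1 + C a * (X 0 * X 1 ^ n) : MvPolynomial (Fin 2) k) ∈
        Algebra.adjoin k ({X 0 ^ 2, X 1 ^ 2, X 0 ^ 2 * X 1 + C a * (X 0 * X 1 ^ n)} :
          Set (MvPolynomial (Fin 2) k)) :=
      Algebra.subset_adjoin (Set.mem_insert_of_mem _ (Set.mem_insert_of_mem _ rfl))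
    have hδf : δ (expand 2 f0 + expand 2 f1 * X 0 + expand 2 f2 * X 1 +
        expand 2 f3 * (X 0 * X 1)) = 0 := hf_eq ▸ hf
    simp only [map_add, Derivation.leibniz, deriv_expand, hx, hy, smul_eq_mul, mul_zero,
      zero_mul, add_zero, zero_add, smul_zero, zero_smul] at hδf
    rcases Nat.even_or_odd' n with ⟨m, hm | hm⟩
    · -- n = 2 * m even
      subst hm
      have hc0 : C (a * ((2 * m : ℕ) : k)) = (0 : MvPolynomial (Fin 2) k) := by
        have : ((2 * m : ℕ) : k) = 0 := by push_cast; rw [CharTwo.two_eq_zero]; ring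
        rw [this, mul_zero, map_zero]
      rw [hc0] at hδf
      have h' : expand 2 (f1 * X 0 + C a * f2 * X 1 ^ m) +
          expand 2 (C a * f3 * X 1 ^ m) * X 0 + expand 2 (f3 * X 0) * X 1 +
          expand 2 0 * (X 0 * X 1) = 0 := by
        simp only [map_add, map_mul, map_pow, map_zero, expand_C, expand_X]
        linear_combination hδf
      obtain ⟨hA, -, hC3, -⟩ := uniq h'
      have hf3 : f3 = 0 := by
        rcases mul_eq_zero.mp hC3 with h | h
        · exact h
        · exact absurd h (X_ne_zero 0)
      subst hf3
      have heq : C a * f2 * X 1 ^ m = f1 * X 0 := by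
        linear_combination hA - f1 * X 0 * h2R
      have hψ : aeval ![0, (X 1 : MvPolynomial (Fin 2) k)] f2 = 0 := by
        have := congrArg (aeval ![0, (X 1 : MvPolynomial (Fin 2) k)]) heq
        simp only [map_mul, map_pow, aeval_C, aeval_X, Matrix.cons_val_zero,
          Matrix.cons_val_one, Matrix.head_cons, mul_zero, algebraMap_eq] at this
        rcases mul_eq_zero.mp this with h | h
        · rcases mul_eq_zero.mp h with h | h
          · exact absurd ((map_eq_zero_iff C (C_injective _ _)).mp h) ha
          · exact h
        · exact absurd h (pow_ne_zero _ (X_ne_zero 1))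
      obtain ⟨g, rfl⟩ := X0_dvd_of_psi_eq_zero hψ
      have hf1 : f1 = C a * g * X 1 ^ m := by
        apply mul_right_cancel₀ (X_ne_zero 0)
        linear_combination -heq
      rw [hf_eq, hf1]
      have : expand 2 f0 + expand 2 (C a * g * X 1 ^ m) * X 0 + expand 2 (X 0 * g) * X 1 +
          expand 2 0 * (X 0 * X 1) =
          expand 2 f0 + expand 2 g * (X 0 ^ 2 * X 1 + C a * (X 0 * X 1 ^ (2 * m))) := by
        simp only [map_add, map_mul, map_pow, map_zero, expand_C, expand_X]
        ring
      rw [this]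
      exact add_mem (hmemE f0) (mul_mem (hmemE g) hwmem)
    · -- n = 2 * m + 1 odd
      subst hm
      have hc1 : C (a * ((2 * m + 1 : ℕ) : k)) = (C a : MvPolynomial (Fin 2) k) := by
        have : ((2 * m + 1 : ℕ) : k) = 1 := by push_cast; rw [CharTwo.two_eq_zero]; ring
        rw [this, mul_one]
      have hsub1 : 2 * m + 1 - 1 = 2 * m := by omega
      rw [hc1, hsub1] at hδf
      have h' : expand 2 (f1 * X 0) + expand 2 (C a * f1 * X 1 ^ m) * X 0 +
          expand 2 (C a * f2 * X 1 ^ m + f3 * X 0) * X 1 +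
          expand 2 0 * (X 0 * X 1) = 0 := by
        simp only [map_add, map_mul, map_pow, map_zero, expand_C, expand_X]
        linear_combination hδf - C a * expand 2 f3 * X 0 * X 1 ^ (2 * m) * X 1 * h2R
      obtain ⟨hA, -, hC3, -⟩ := uniq h'
      have hf1 : f1 = 0 := by
        rcases mul_eq_zero.mp hA with h | h
        · exact h
        · exact absurd h (X_ne_zero 0)
      subst hf1
      have heq : C a * f2 * X 1 ^ m = f3 * X 0 := by
        linear_combination hC3 - f3 * X 0 * h2R
      have hψ : aeval ![0, (X 1 : MvPolynomial (Fin 2) k)] f2 = 0 := by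
        have := congrArg (aeval ![0, (X 1 : MvPolynomial (Fin 2) k)]) heq
        simp only [map_mul, map_pow, aeval_C, aeval_X, Matrix.cons_val_zero,
          Matrix.cons_val_one, Matrix.head_cons, mul_zero, algebraMap_eq] at this
        rcases mul_eq_zero.mp this with h | h
        · rcases mul_eq_zero.mp h with h | h
          · exact absurd ((map_eq_zero_iff C (C_injective _ _)).mp h) ha
          · exact h
        · exact absurd h (pow_ne_zero _ (X_ne_zero 1))
      obtain ⟨g, rfl⟩ := X0_dvd_of_psi_eq_zero hψ
      have hf3 : f3 = C a * g * X 1 ^ m := by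
        apply mul_right_cancel₀ (X_ne_zero 0)
        linear_combination -heq
      rw [hf_eq, hf3]
      have : expand 2 f0 + expand 2 0 * X 0 + expand 2 (X 0 * g) * X 1 +
          expand 2 (C a * g * X 1 ^ m) * (X 0 * X 1) =
          expand 2 f0 + expand 2 g * (X 0 ^ 2 * X 1 + C a * (X 0 * X 1 ^ (2 * m + 1))) := by
        simp only [map_add, map_mul, map_pow, map_zero, expand_C, expand_X]
        ring
      rw [this]
      exact add_mem (hmemE f0) (mul_mem (hmemE g) hwmem)
  · -- easy direction: adjoin ⊆ kernel
    intro hf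
    refine Algebra.adjoin_induction ?_ ?_ ?_ ?_ hf
    · rintro x (rfl | rfl | rfl)
      · exact deriv_sq_zero δ _
      · exact deriv_sq_zero δ _
      · simp only [map_add, Derivation.leibniz, Derivation.leibniz_pow, deriv_sq_zero, hx, hy,
          hC, CharTwo.two_nsmul, smul_eq_mul, nsmul_eq_mul, smul_zero, mul_zero, add_zero,
          zero_add, zero_mul, mul_one, hcast]
        linear_combination (C a * X 0 ^ 2 * X 1 ^ n +
          C a * C a * (n : MvPolynomial (Fin 2) k) * X 0 * X 1 ^ (n - 1) * X 1 ^ n +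
          X 0 ^ 2 * X 1 * X 1 ^ (n - 1) * C a * (n : MvPolynomial (Fin 2) k) +
          X 0 ^ 3 * X 1) * h2R
    · exact fun r => Derivation.map_algebraMap δ r
    · exact fun x y _ _ hx' hy' => by rw [map_add, hx', hy', add_zero]
    · exact fun x y _ _ hx' hy' => by
        rw [Derivation.leibniz, hx', hy', smul_zero, smul_zero, add_zero]
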